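/- arXiv:1301.1293 — 3 statements merged into one kernel-verified Lean document; each statement's English description precedes it below -/
import Mathlib

section
/- Fix N ≥ 1 and assume γ̲ := inf{γ₁(x₁,x₂) : x₁ ≥ 1, x₂ ≥ 0} > 0. Let (X₁ᴺ, X₂ᴺ) be an ℕ²-valued càdlàg adapted process satisfying the martingale property for B_N with the function f(x₁,x₂) = x₁, with E[X₁ᴺ(0)] < ∞ and ∫₀ᵗ E[λ₁(X₁ᴺ(s),X₂ᴺ(s))] ds < ∞ for all t. Then for every t ≥ 0: γ̲ · N · E[∫₀ᵗ 1_{X₁ᴺ(s) ≥ 1} ds] ≤ E[X₁ᴺ(0)] + ∫₀ᵗ E[λ₁(X₁ᴺ(s),X₂ᴺ(s))] ds. -/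
open MeasureTheory Filter
open scoped ENNReal

/-- The scaled generator `B_N` of the two-dimensional discrete birth-and-death model. -/
noncomputable def BN (lam1 gam1 lam2 gam2 : ℕ × ℕ → ℝ) (N : ℕ)
    (f : ℕ × ℕ → ℝ) (p : ℕ × ℕ) : ℝ :=
  lam1 p * (f (p.1 + 1, p.2) - f p) + (N : ℝ) * gam1 p * (f (p.1 - 1, p.2) - f p)
    + (N : ℝ) * lam2 p * (f (p.1, p.2 + 1) - f p) + gam2 p * (f (p.1, p.2 - 1) - f p)

open Topology Finset
open scoped NNReal

lemma BN_eq (lam1 gam1 lam2 gam2 : ℕ × ℕ → ℝ) (N : ℕ)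
    (hgam10 : ∀ x2 : ℕ, gam1 (0, x2) = 0) (p : ℕ × ℕ) :
    BN lam1 gam1 lam2 gam2 N (fun p => (p.1 : ℝ)) p = lam1 p - N * gam1 p := by
  obtain ⟨x1, x2⟩ := p
  unfold BN
  rcases x1 with _ | n
  · simp [hgam10]
  · push_cast [Nat.succ_sub_one]
    ring

-- joint measurability
lemma joint_meas {Ω : Type*} [MeasurableSpace Ω] (X : ℝ → Ω → ℕ × ℕ)
    (hX : ∀ s, Measurable (X s))
    (hc : ∀ ω s, ContinuousWithinAt (fun u => X u ω) (Set.Ici s) s) :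
    Measurable (fun q : ℝ × Ω => X q.1 q.2) := by
  have hfin : ∀ n : ℕ, Measurable (fun q : ℝ × Ω => X ((⌈q.1 * 2 ^ n⌉ : ℤ) / 2 ^ n) q.2) := by
    intro n
    have hG : Measurable (fun r : Ω × ℤ => X ((r.2 : ℝ) / 2 ^ n) r.1) :=
      measurable_from_prod_countable_left (fun k => by simpa using hX ((k : ℝ) / 2 ^ n))
    exact hG.comp (measurable_snd.prodMk (Int.measurable_ceil.comp (measurable_fst.mul_const _)))
  have htend : ∀ q : ℝ × Ω,
      Tendsto (fun n : ℕ => X ((⌈q.1 * 2 ^ n⌉ : ℤ) / 2 ^ n) q.2) atTop (𝓝 (X q.1 q.2)) := by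
    rintro ⟨s, ω⟩
    have h1 : Tendsto (fun n : ℕ => ((⌈s * 2 ^ n⌉ : ℤ) / 2 ^ n : ℝ)) atTop (𝓝[Set.Ici s] s) := by
      rw [tendsto_nhdsWithin_iff]
      constructor
      · have hb : ∀ n : ℕ, ((⌈s * 2 ^ n⌉ : ℤ) / 2 ^ n : ℝ) ∈ Set.Icc s (s + (1/2) ^ n) := by
          intro n
          have h2 : (0:ℝ) < 2 ^ n := by positivity
          constructor
          · rw [le_div_iff₀ h2]; exact Int.le_ceil _
          · rw [div_le_iff₀ h2]
            have := (Int.ceil_lt_add_one (s * 2 ^ n)).le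
            calc ((⌈s * 2 ^ n⌉ : ℤ) : ℝ) ≤ s * 2 ^ n + 1 := this
              _ = (s + (1/2)^n) * 2 ^ n := by
                rw [add_mul, ← mul_pow, one_div, inv_mul_cancel₀ (two_ne_zero), one_pow]
        have h3 : Tendsto (fun n : ℕ => s + (1/2 : ℝ) ^ n) atTop (𝓝 (s + 0)) :=
          tendsto_const_nhds.add (tendsto_pow_atTop_nhds_zero_of_lt_one (by norm_num) (by norm_num))
        rw [add_zero] at h3
        exact tendsto_of_tendsto_of_tendsto_of_le_of_le tendsto_const_nhds h3
          (fun n => (hb n).1) (fun n => (hb n).2)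
      · exact Eventually.of_forall fun n => by
          have h2 : (0:ℝ) < 2 ^ n := by positivity
          exact (le_div_iff₀ h2).2 (Int.le_ceil _)
    exact (hc ω s).tendsto.comp h1
  -- measurability of the pointwise limit into a countable discrete space
  apply measurable_to_countable'
  intro p
  have hset : (fun q : ℝ × Ω => X q.1 q.2) ⁻¹' {p}
      = ⋃ m : ℕ, ⋂ n : ℕ, ⋂ _ : m ≤ n,
        (fun q : ℝ × Ω => X ((⌈q.1 * 2 ^ n⌉ : ℤ) / 2 ^ n) q.2) ⁻¹' {p} := by
    ext q
    simp only [Set.mem_preimage, Set.mem_singleton_iff, Set.mem_iUnion, Set.mem_iInter]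
    constructor
    · intro h
      have := htend q
      rw [h] at this
      rw [nhds_discrete, tendsto_pure] at this
      obtain ⟨m, hm⟩ := this.exists_forall_of_atTop
      exact ⟨m, fun n hn => hm n hn⟩
    · rintro ⟨m, hm⟩
      have h1 : Tendsto (fun n : ℕ => X ((⌈q.1 * 2 ^ n⌉ : ℤ) / 2 ^ n) q.2) atTop (𝓝 p) := by
        rw [nhds_discrete, tendsto_pure]
        exact eventually_atTop.2 ⟨m, hm⟩
      exact tendsto_nhds_unique (htend q) h1
  rw [hset]
  exact MeasurableSet.iUnion fun m => MeasurableSet.iInter fun n => MeasurableSet.iInter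
    fun _ => (hfin n) (measurableSet_singleton p)

lemma path_sup (lam1 gam1 : ℕ × ℕ → ℝ)
    (hlam1 : ∀ p, 0 ≤ lam1 p) (hgam1 : ∀ p, 0 ≤ gam1 p)
    (N : ℕ) (hN : 1 ≤ N) (t : ℝ) (ht : 0 ≤ t)
    (Y : ℝ → ℕ × ℕ) (hYm : Measurable Y)
    (hYc : ∀ s, ContinuousWithinAt Y (Set.Ici s) s)
    (hl : (∫⁻ s in Set.Ioc 0 t, ENNReal.ofReal (lam1 (Y s))) ≠ ∞)
    (hg : (∫⁻ s in Set.Ioc 0 t, ENNReal.ofReal (gam1 (Y s))) = ∞)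
    (K : ℝ) :
    ∃ n j : ℕ, j ≤ 2 ^ n ∧ K ≤ ((Y ((j : ℝ) * t / 2 ^ n)).1 : ℝ) - ((Y 0).1 : ℝ)
      - ∫ s in (0:ℝ)..((j : ℝ) * t / 2 ^ n), (lam1 (Y s) - (N : ℝ) * gam1 (Y s)) := by
  have ht0 : 0 < t := by
    rcases lt_or_eq_of_le ht with h | h
    · exact h
    · exfalso; rw [← h] at hg; simp at hg
  set g : ℝ → ℝ≥0∞ := fun s => ENNReal.ofReal (gam1 (Y s)) with hgdef
  set l : ℝ → ℝ≥0∞ := fun s => ENNReal.ofReal (lam1 (Y s)) with hldef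
  have hgm : Measurable g := ((measurable_of_countable _).comp hYm).ennreal_ofReal
  have hlm : Measurable l := ((measurable_of_countable _).comp hYm).ennreal_ofReal
  set S : Set ℝ := {u : ℝ | u ∈ Set.Icc 0 t ∧ (∫⁻ s in Set.Ioc 0 u, g s) ≠ ∞} with hSdef
  have hS0 : (0:ℝ) ∈ S := ⟨⟨le_refl 0, ht⟩, by simp⟩
  have hSne : S.Nonempty := ⟨0, hS0⟩
  have hSb : BddAbove S := ⟨t, fun u hu => hu.1.2⟩
  set τ : ℝ := sSup S with hτdef
  have hτ0 : 0 ≤ τ := le_csSup hSb hS0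
  have hτt : τ ≤ t := csSup_le hSne fun u hu => hu.1.2
  have hmono : ∀ u v : ℝ, u ≤ v →
      (∫⁻ s in Set.Ioc 0 u, g s) ≤ ∫⁻ s in Set.Ioc 0 v, g s :=
    fun u v huv => lintegral_mono_set (Set.Ioc_subset_Ioc_right huv)
  -- the integral up to τ is infinite
  have hτinf : (∫⁻ s in Set.Ioc 0 τ, g s) = ∞ := by
    by_contra hfin
    have hev : ∀ᶠ u in 𝓝[Set.Ici τ] τ, Y u = Y τ := by
      have h1 := hYc τ
      rw [ContinuousWithinAt, nhds_discrete, tendsto_pure] at h1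
      exact h1
    obtain ⟨u', hu', hsubs⟩ := (nhdsGE_basis_Ico τ).eventually_iff.1 hev
    rcases eq_or_lt_of_le hτt with hteq | htlt
    · rw [hteq] at hfin; exact hfin hg
    · set τ' : ℝ := min t ((τ + u') / 2) with hτ'def
      have hττ' : τ < τ' := lt_min htlt (by linarith)
      have hτ't : τ' ≤ t := min_le_left _ _
      have hsplit : (∫⁻ s in Set.Ioc 0 τ', g s)
          = (∫⁻ s in Set.Ioc 0 τ, g s) + ∫⁻ s in Set.Ioc τ τ', g s := by
        rw [← Set.Ioc_union_Ioc_eq_Ioc hτ0 hττ'.le,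
          lintegral_union measurableSet_Ioc (Set.Ioc_disjoint_Ioc_of_le le_rfl)]
      have hconst : ∀ s ∈ Set.Ioc τ τ', g s = g τ := by
        intro s hs
        have : s ∈ Set.Ico τ u' := ⟨hs.1.le, by
          have : τ' ≤ (τ + u') / 2 := min_le_right _ _
          have := hs.2
          linarith⟩
        simp only [hgdef]
        rw [hsubs this]
      have hbd : (∫⁻ s in Set.Ioc τ τ', g s) ≠ ∞ := by
        rw [setLIntegral_congr_fun measurableSet_Ioc hconst,
          setLIntegral_const]
        exact ENNReal.mul_ne_top ENNReal.ofReal_ne_top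
          (by rw [Real.volume_Ioc]; exact ENNReal.ofReal_ne_top)
      have hτ'S : τ' ∈ S := ⟨⟨le_trans hτ0 hττ'.le, hτ't⟩, by
        rw [hsplit]; exact ENNReal.add_ne_top.2 ⟨hfin, hbd⟩⟩
      exact absurd (le_csSup hSb hτ'S) (not_le.2 hττ')
  have hτpos : 0 < τ := by
    rcases eq_or_lt_of_le hτ0 with h | h
    · exfalso; rw [← h] at hτinf; simp at hτinf
    · exact h
  -- supremum of integrals over Ioc 0 u, u < τ, is infinite
  set u : ℕ → ℝ := fun k => τ - τ / (k + 2) with hudef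
  have hu0 : ∀ k, 0 ≤ u k := by
    intro k
    have h1 : τ / (k + 2) ≤ τ / 1 := by
      apply div_le_div_of_nonneg_left hτ0 one_pos
      push_cast; linarith [Nat.cast_nonneg (α := ℝ) k]
    simp only [hudef]
    rw [div_one] at h1
    linarith
  have hulttau : ∀ k, u k < τ := by
    intro k
    have : 0 < τ / (k + 2) := by positivity
    simp only [hudef]; linarith
  have humono : Monotone u := by
    intro i j hij
    have h2 : τ / (j + 2) ≤ τ / (i + 2) := by
      apply div_le_div_of_nonneg_left hτ0 (by positivity)
      push_cast; linarith [(Nat.cast_le (α := ℝ)).2 hij]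
    simp only [hudef]; linarith
  have hsup : (⨆ k : ℕ, ∫⁻ s in Set.Ioc 0 (u k), g s) = ∞ := by
    have hind : ∀ k : ℕ, (∫⁻ s in Set.Ioc 0 (u k), g s)
        = ∫⁻ s, (Set.Ioc 0 (u k)).indicator g s := by
      intro k; rw [lintegral_indicator measurableSet_Ioc]
    have hmonoind : Monotone fun k : ℕ => (Set.Ioc 0 (u k)).indicator g := by
      intro i j hij s
      exact Set.indicator_le_indicator_of_subset
        (Set.Ioc_subset_Ioc_right (humono hij)) (fun _ => zero_le) s
    have hix : ∀ s : ℝ, (⨆ k : ℕ, (Set.Ioc 0 (u k)).indicator g s)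
        = (Set.Ioo 0 τ).indicator g s := by
      intro s
      by_cases hs : s ∈ Set.Ioo 0 τ
      · rw [Set.indicator_of_mem hs]
        obtain ⟨k, hk⟩ := exists_nat_gt (τ / (τ - s))
        apply le_antisymm
        · exact iSup_le fun k => Set.indicator_le' (fun _ _ => le_refl _) (fun _ _ => zero_le) s
        · have hsk : s ∈ Set.Ioc 0 (u k) := by
            constructor
            · exact hs.1
            · have hts : 0 < τ - s := by linarith [hs.2]
              have h3 : τ / (τ - s) < (k : ℝ) + 2 := by linarith [Nat.cast_nonneg (α := ℝ) k]
              have h4 : τ / ((k : ℝ) + 2) < τ - s := by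
                rw [div_lt_iff₀ (by positivity)]
                rw [div_lt_iff₀ hts] at h3
                linarith
              simp only [hudef]; linarith
          refine le_trans ?_ (le_iSup _ k)
          rw [Set.indicator_of_mem hsk]
      · rw [Set.indicator_of_notMem hs]
        apply le_antisymm _ zero_le
        apply iSup_le
        intro k
        rw [Set.indicator_of_notMem]
        intro hks
        exact hs ⟨hks.1, lt_of_le_of_lt hks.2 (hulttau k)⟩
    calc (⨆ k : ℕ, ∫⁻ s in Set.Ioc 0 (u k), g s)
        = ⨆ k : ℕ, ∫⁻ s, (Set.Ioc 0 (u k)).indicator g s := by simp_rw [hind]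
      _ = ∫⁻ s, ⨆ k : ℕ, (Set.Ioc 0 (u k)).indicator g s := by
          rw [lintegral_iSup (fun k => hgm.indicator measurableSet_Ioc) hmonoind]
      _ = ∫⁻ s, (Set.Ioo 0 τ).indicator g s := by simp_rw [hix]
      _ = ∫⁻ s in Set.Ioo 0 τ, g s := by rw [lintegral_indicator measurableSet_Ioo]
      _ = ∫⁻ s in Set.Ioc 0 τ, g s := by
          rw [Measure.restrict_congr_set Ioo_ae_eq_Ioc]
      _ = ∞ := hτinf
  -- choose a starting point u k with large integral
  set X10 : ℝ := ((Y 0).1 : ℝ) with hX10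
  set Lt : ℝ := (∫⁻ s in Set.Ioc 0 t, l s).toReal with hLt
  set K₂ : ℝ := max 0 (K + X10 + Lt) with hK₂
  have hK₂0 : 0 ≤ K₂ := le_max_left _ _
  have hbig : ENNReal.ofReal K₂ < ⨆ k : ℕ, ∫⁻ s in Set.Ioc 0 (u k), g s := by
    rw [hsup]; exact ENNReal.ofReal_lt_top
  obtain ⟨k, hk⟩ := lt_iSup_iff.1 hbig
  -- integrability beyond u k
  obtain ⟨a, haS, hua⟩ := exists_lt_of_lt_csSup hSne (hulttau k)
  have hat : a ≤ t := haS.1.2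
  have haInt : (∫⁻ s in Set.Ioc 0 a, g s) ≠ ∞ := haS.2
  -- grid point in [u k, a)
  obtain ⟨n, hn⟩ := exists_pow_lt_of_lt_one (show (0:ℝ) < (a - u k) / t by
    apply div_pos (by linarith) ht0) (show (1:ℝ)/2 < 1 by norm_num)
  have h2n : (0:ℝ) < 2 ^ n := by positivity
  have hmesh : t / 2 ^ n < a - u k := by
    have h1 : t / 2 ^ n = t * (1 / 2 : ℝ) ^ n := by
      rw [div_pow, one_pow]; ring
    have h2 : t * ((1:ℝ)/2) ^ n < t * ((a - u k)/t) :=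
      mul_lt_mul_of_pos_left hn ht0
    have h3 : t * ((a - u k)/t) = a - u k := by field_simp
    rw [h1]; linarith
  set j : ℕ := ⌈u k * 2 ^ n / t⌉₊ with hjdef
  set v : ℝ := (j : ℝ) * t / 2 ^ n with hvdef
  have hv1 : u k ≤ v := by
    have h1 := Nat.le_ceil (u k * 2 ^ n / t)
    rw [← hjdef] at h1
    have h2 := (div_le_iff₀ ht0).1 h1
    rw [hvdef, le_div_iff₀ h2n]
    linarith
  have hv2 : v < a := by
    have h1 := Nat.ceil_lt_add_one (a := u k * 2 ^ n / t) (div_nonneg (mul_nonneg (hu0 k) (by positivity : (0:ℝ) ≤ 2 ^ n)) ht0.le)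
    rw [← hjdef] at h1
    have h2 : (j : ℝ) * t / 2 ^ n < (u k * 2 ^ n / t + 1) * t / 2 ^ n := by gcongr
    have h3 : (u k * 2 ^ n / t + 1) * t / 2 ^ n = u k + t / 2 ^ n := by
      field_simp
    rw [hvdef]
    rw [h3] at h2
    linarith
  have hvt : v ≤ t := le_of_lt (lt_of_lt_of_le hv2 hat)
  have hv0 : 0 ≤ v := le_trans (hu0 k) hv1
  have hjle : j ≤ 2 ^ n := by
    have h1 : (j : ℝ) * t / 2 ^ n < t := lt_of_lt_of_le hv2 hat
    rw [div_lt_iff₀ h2n] at h1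
    have h2 : (j : ℝ) < 2 ^ n := by nlinarith
    have h3 : (j : ℕ) < 2 ^ n := by exact_mod_cast h2
    exact h3.le
  have hgv : (∫⁻ s in Set.Ioc 0 v, g s) ≠ ∞ :=
    ne_top_of_le_ne_top haInt (hmono v a hv2.le)
  have hlv : (∫⁻ s in Set.Ioc 0 v, l s) ≠ ∞ :=
    ne_top_of_le_ne_top hl (lintegral_mono_set (Set.Ioc_subset_Ioc_right hvt))
  have hgsm : AEStronglyMeasurable (fun s => gam1 (Y s)) (volume.restrict (Set.Ioc 0 v)) :=
    ((measurable_of_countable _).comp hYm).aestronglyMeasurable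
  have hlsm : AEStronglyMeasurable (fun s => lam1 (Y s)) (volume.restrict (Set.Ioc 0 v)) :=
    ((measurable_of_countable _).comp hYm).aestronglyMeasurable
  have hgInt : IntegrableOn (fun s => gam1 (Y s)) (Set.Ioc 0 v) := by
    refine ⟨hgsm, ?_⟩
    rw [hasFiniteIntegral_iff_ofReal (ae_of_all _ fun s => hgam1 _)]
    exact lt_top_iff_ne_top.2 hgv
  have hlInt : IntegrableOn (fun s => lam1 (Y s)) (Set.Ioc 0 v) := by
    refine ⟨hlsm, ?_⟩
    rw [hasFiniteIntegral_iff_ofReal (ae_of_all _ fun s => hlam1 _)]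
    exact lt_top_iff_ne_top.2 hlv
  have hgII : IntervalIntegrable (fun s => gam1 (Y s)) volume 0 v :=
    (intervalIntegrable_iff_integrableOn_Ioc_of_le hv0).2 hgInt
  have hlII : IntervalIntegrable (fun s => lam1 (Y s)) volume 0 v :=
    (intervalIntegrable_iff_integrableOn_Ioc_of_le hv0).2 hlInt
  have hGval : ∫ s in (0:ℝ)..v, gam1 (Y s) = (∫⁻ s in Set.Ioc 0 v, g s).toReal := by
    rw [intervalIntegral.integral_of_le hv0,
      integral_eq_lintegral_of_nonneg_ae (ae_of_all _ fun s => hgam1 _) hgsm]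
  have hLval : ∫ s in (0:ℝ)..v, lam1 (Y s) = (∫⁻ s in Set.Ioc 0 v, l s).toReal := by
    rw [intervalIntegral.integral_of_le hv0,
      integral_eq_lintegral_of_nonneg_ae (ae_of_all _ fun s => hlam1 _) hlsm]
  have hGlow : K₂ ≤ ∫ s in (0:ℝ)..v, gam1 (Y s) := by
    rw [hGval]
    have h1 : ENNReal.ofReal K₂ ≤ ∫⁻ s in Set.Ioc 0 v, g s :=
      le_trans hk.le (hmono _ _ hv1)
    have h2 := ENNReal.toReal_mono hgv h1
    rwa [ENNReal.toReal_ofReal hK₂0] at h2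
  have hLhigh : ∫ s in (0:ℝ)..v, lam1 (Y s) ≤ Lt := by
    rw [hLval]
    exact ENNReal.toReal_mono hl (lintegral_mono_set (Set.Ioc_subset_Ioc_right hvt))
  refine ⟨n, j, hjle, ?_⟩
  rw [← hvdef]
  have hsplitI : ∫ s in (0:ℝ)..v, (lam1 (Y s) - (N:ℝ) * gam1 (Y s))
      = (∫ s in (0:ℝ)..v, lam1 (Y s)) - (N:ℝ) * ∫ s in (0:ℝ)..v, gam1 (Y s) := by
    rw [intervalIntegral.integral_sub hlII (hgII.const_mul _),
      intervalIntegral.integral_const_mul]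
  have hNG : (∫ s in (0:ℝ)..v, gam1 (Y s)) ≤ (N:ℝ) * ∫ s in (0:ℝ)..v, gam1 (Y s) := by
    apply le_mul_of_one_le_left (le_trans hK₂0 hGlow) (by exact_mod_cast hN)
  have hY1 : (0:ℝ) ≤ ((Y v).1 : ℝ) := Nat.cast_nonneg _
  have hK₂ge : K + X10 + Lt ≤ K₂ := le_max_right _ _
  rw [hsplitI]
  linarith

lemma doob_sup {Ω : Type*} {m0 : MeasurableSpace Ω} {μ : Measure Ω} [IsProbabilityMeasure μ]
    (ℱ : Filtration ℝ m0) {M : ℝ → Ω → ℝ} (hM : Martingale M ℱ μ)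
    (t : ℝ) (ht : 0 ≤ t) (B : Set Ω)
    (hB : ∀ ω ∈ B, ∀ K : ℝ, ∃ n j : ℕ, j ≤ 2 ^ n ∧ K ≤ M ((j : ℝ) * t / 2 ^ n) ω) :
    μ B = 0 := by
  set P : ℝ → Ω → ℝ := fun u ω => M u ω ⊔ 0 with hPdef
  have hP : Submartingale P ℱ μ := hM.submartingale.sup (martingale_zero _ _ _).submartingale
  have hPnonneg : ∀ u ω, 0 ≤ P u ω := fun u ω => le_sup_right
  set κ : ℕ → ℕ → ℝ := fun n j => ((min j (2 ^ n) : ℕ) : ℝ) * t / 2 ^ n with hκ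
  have hκmono : ∀ n, Monotone (κ n) := by
    intro n i j hij
    have h1 : ((min i (2 ^ n) : ℕ) : ℝ) ≤ ((min j (2 ^ n) : ℕ) : ℝ) := by
      exact_mod_cast min_le_min_right _ hij
    exact div_le_div_of_nonneg_right (mul_le_mul_of_nonneg_right h1 ht) (by positivity)
  have hκtop : ∀ n : ℕ, κ n (2 ^ n) = t := by
    intro n
    have h2 : ((2:ℝ) ^ n) ≠ 0 := by positivity
    simp only [hκ, min_self]
    push_cast
    field_simp
  have hκeq : ∀ n j : ℕ, j ≤ 2 ^ n → κ n j = (j : ℝ) * t / 2 ^ n := by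
    intro n j hj; simp only [hκ, min_eq_left hj]
  -- level-n submartingale
  have hsub : ∀ n : ℕ, Submartingale (fun j => P (κ n j))
      ⟨fun j => ℱ (κ n j), fun i j hij => ℱ.mono (hκmono n hij), fun j => ℱ.le _⟩ μ :=
    fun n => ⟨fun j => hP.stronglyAdapted (κ n j), fun i j hij => hP.2.1 _ _ (hκmono n hij),
      fun j => hP.integrable _⟩
  set C : ℝ≥0∞ := ENNReal.ofReal (∫ ω, P t ω ∂μ) with hC
  -- events, per positive real level ε
  have key : ∀ ε : ℝ≥0, 0 < ε → (ε : ℝ≥0∞) * μ B ≤ C := by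
    intro ε hε
    set E : ℕ → Set Ω := fun n =>
      {ω | (ε:ℝ) ≤ (range (2 ^ n + 1)).sup' nonempty_range_add_one fun k => P (κ n k) ω} with hE
    have hEmeas : ∀ n, MeasurableSet (E n) := by
      intro n
      exact measurableSet_le measurable_const
        (Finset.measurable_range_sup'' fun k _ =>
          ((hP.stronglyMeasurable _).measurable.le (ℱ.le _)))
    have hEmono : Monotone E := by
      refine monotone_nat_of_le_succ fun n => ?_
      intro ω hω
      simp only [hE, Set.mem_setOf_eq, Finset.le_sup'_iff] at hω ⊢
      obtain ⟨k, hk, hke⟩ := hω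
      rw [Finset.mem_range, Nat.lt_succ_iff] at hk
      refine ⟨2 * k, ?_, ?_⟩
      · rw [Finset.mem_range, Nat.lt_succ_iff]; omega
      · have : κ (n+1) (2*k) = κ n k := by
          rw [hκeq n k hk, hκeq (n+1) (2*k) (by omega)]
          push_cast
          rw [pow_succ]
          ring
        rwa [this]
    -- Doob at each level
    have hlevel : ∀ n : ℕ, (ε : ℝ≥0∞) * μ (E n) ≤ C := by
      intro n
      have h1 := maximal_ineq (hsub n) (fun j ω => hPnonneg _ _) (ε := ε) (2 ^ n)
      have h2 : ∫ ω in {ω | (ε:ℝ) ≤ (range (2 ^ n + 1)).sup' nonempty_range_add_one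
            fun k => P (κ n k) ω}, P (κ n (2 ^ n)) ω ∂μ ≤ ∫ ω, P (κ n (2 ^ n)) ω ∂μ :=
        setIntegral_le_integral (hP.integrable _) (Eventually.of_forall fun ω => hPnonneg _ _)
      calc (ε : ℝ≥0∞) * μ (E n) = ε • μ (E n) := rfl
        _ ≤ ENNReal.ofReal (∫ ω in {ω | (ε:ℝ) ≤ (range (2 ^ n + 1)).sup' nonempty_range_add_one
              fun k => P (κ n k) ω}, P (κ n (2 ^ n)) ω ∂μ) := h1
        _ ≤ ENNReal.ofReal (∫ ω, P (κ n (2 ^ n)) ω ∂μ) := ENNReal.ofReal_le_ofReal h2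
        _ = C := by rw [hκtop n]
    -- B is covered
    have hcover : B ⊆ ⋃ n, E n := by
      intro ω hω
      obtain ⟨n, j, hj, hK⟩ := hB ω hω (ε : ℝ)
      refine Set.mem_iUnion.2 ⟨n, ?_⟩
      simp only [hE, Set.mem_setOf_eq, Finset.le_sup'_iff]
      refine ⟨j, by rw [Finset.mem_range, Nat.lt_succ_iff]; exact hj, ?_⟩
      rw [hκeq n j hj]
      exact le_trans hK le_sup_left
    calc (ε : ℝ≥0∞) * μ B ≤ (ε : ℝ≥0∞) * μ (⋃ n, E n) := by
          exact mul_le_mul_right (measure_mono hcover) _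
      _ = (ε : ℝ≥0∞) * ⨆ n, μ (E n) := by
          rw [Directed.measure_iUnion (hEmono.directed_le)]
      _ = ⨆ n, (ε : ℝ≥0∞) * μ (E n) := by rw [ENNReal.mul_iSup]
      _ ≤ C := iSup_le hlevel
  -- conclude
  by_contra hne
  have hpos : 0 < μ B := pos_iff_ne_zero.2 hne
  have hfin : μ B ≠ ∞ := measure_ne_top μ B
  have hCne : C / μ B ≠ ∞ := (ENNReal.div_lt_top ENNReal.ofReal_ne_top hne).ne
  obtain ⟨n, hn⟩ := ENNReal.exists_nat_gt hCne
  have hn1 : 1 ≤ n := by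
    by_contra h
    interval_cases n
    · simp at hn
  have h3 : C < (n : ℝ≥0∞) * μ B := by
    rwa [ENNReal.div_lt_iff (Or.inl hne) (Or.inl hfin)] at hn
  have h4 := key (n : ℝ≥0) (by exact_mod_cast hn1)
  rw [ENNReal.coe_natCast] at h4
  exact absurd (lt_of_le_of_lt h4 h3) (by simp)

/-- If `γ̲ := inf{γ₁(x₁,x₂) : x₁ ≥ 1} > 0` and `(X₁ᴺ, X₂ᴺ)` satisfies the
martingale property for `B_N` with `f(x₁,x₂) = x₁`, integrable initial first component and
integrable intensity `λ₁`, then for every `t ≥ 0`: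
`γ̲ · N · E[∫₀ᵗ 1_{X₁ᴺ(s) ≥ 1} ds] ≤ E[X₁ᴺ(0)] + ∫₀ᵗ E[λ₁(X₁ᴺ(s),X₂ᴺ(s))] ds`. -/
theorem stmt_1
    {Ω : Type*} {m0 : MeasurableSpace Ω} {μ : Measure Ω} [IsProbabilityMeasure μ]
    (ℱ : Filtration ℝ m0)
    (lam1 gam1 lam2 gam2 : ℕ × ℕ → ℝ)
    (hlam1 : ∀ p, 0 ≤ lam1 p) (hgam1 : ∀ p, 0 ≤ gam1 p)
    (hlam2 : ∀ p, 0 ≤ lam2 p) (hgam2 : ∀ p, 0 ≤ gam2 p)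
    (hgam10 : ∀ x2 : ℕ, gam1 (0, x2) = 0) (hgam20 : ∀ x1 : ℕ, gam2 (x1, 0) = 0)
    (N : ℕ) (hN : 1 ≤ N)
    (hinf : 0 < sInf (gam1 '' {p : ℕ × ℕ | 1 ≤ p.1}))
    (X : ℝ → Ω → ℕ × ℕ)
    (hadapt : Adapted ℱ X)
    (hcadlag : ∀ ω t, ContinuousWithinAt (fun s => X s ω) (Set.Ici t) t)
    (hmart : Martingale
      (fun t ω => ((X t ω).1 : ℝ) - ((X 0 ω).1 : ℝ)
        - ∫ s in (0:ℝ)..t,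
            BN lam1 gam1 lam2 gam2 N (fun p => (p.1 : ℝ)) (X s ω)) ℱ μ)
    (h0int : Integrable (fun ω => ((X 0 ω).1 : ℝ)) μ)
    (hlamint : ∀ s : ℝ, Integrable (fun ω => lam1 (X s ω)) μ)
    (hlamII : ∀ t : ℝ, 0 ≤ t →
      IntervalIntegrable (fun s => ∫ ω, lam1 (X s ω) ∂μ) MeasureTheory.volume 0 t)
    (t : ℝ) (ht : 0 ≤ t) :
    sInf (gam1 '' {p : ℕ × ℕ | 1 ≤ p.1}) * (N : ℝ) *
        (∫ ω, (∫ s in (0:ℝ)..t, if 1 ≤ (X s ω).1 then (1:ℝ) else 0) ∂μ)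
      ≤ (∫ ω, ((X 0 ω).1 : ℝ) ∂μ) + ∫ s in (0:ℝ)..t, (∫ ω, lam1 (X s ω) ∂μ) := by
  classical
  set γ : ℝ := sInf (gam1 '' {p : ℕ × ℕ | 1 ≤ p.1}) with hγdef
  have hγle : ∀ p : ℕ × ℕ, 1 ≤ p.1 → γ ≤ gam1 p := fun p hp =>
    csInf_le ⟨0, by rintro y ⟨q, _, rfl⟩; exact hgam1 q⟩ ⟨p, hp, rfl⟩
  have hγ0 : 0 ≤ γ := hinf.le
  -- measurability of the process
  have hXs : ∀ s, Measurable (X s) := fun s =>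
    (hadapt s).mono (ℱ.le s) le_rfl
  have JM : Measurable (fun q : ℝ × Ω => X q.1 q.2) :=
    joint_meas X hXs (fun ω s => hcadlag ω s)
  have hpathm : ∀ ω, Measurable (fun s => X s ω) := fun ω =>
    JM.comp (measurable_id.prodMk measurable_const)
  -- the martingale
  set M : ℝ → Ω → ℝ := fun u ω => ((X u ω).1 : ℝ) - ((X 0 ω).1 : ℝ)
      - ∫ s in (0:ℝ)..u, BN lam1 gam1 lam2 gam2 N (fun p => (p.1 : ℝ)) (X s ω) with hMdef
  have hmart' : Martingale M ℱ μ := hmart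
  have hMt : ∀ u ω, M u ω = ((X u ω).1 : ℝ) - ((X 0 ω).1 : ℝ)
      - ∫ s in (0:ℝ)..u, (lam1 (X s ω) - (N : ℝ) * gam1 (X s ω)) := by
    intro u ω
    have h1 : (∫ s in (0:ℝ)..u, BN lam1 gam1 lam2 gam2 N (fun p => (p.1 : ℝ)) (X s ω))
        = ∫ s in (0:ℝ)..u, (lam1 (X s ω) - (N : ℝ) * gam1 (X s ω)) :=
      intervalIntegral.integral_congr fun s _ => BN_eq lam1 gam1 lam2 gam2 N hgam10 _
    simp only [hMdef]
    rw [h1]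
  have hM0 : ∀ ω, M 0 ω = 0 := by
    intro ω; simp only [hMdef]; simp
  have hEM : ∫ ω, M t ω ∂μ = 0 := by
    have h1 := hmart'.condExp_ae_eq ht
    calc ∫ ω, M t ω ∂μ = ∫ ω, (μ[M t|ℱ 0]) ω ∂μ := (integral_condExp (ℱ.le 0)).symm
      _ = ∫ ω, M 0 ω ∂μ := integral_congr_ae h1
      _ = 0 := by simp [hM0]
  -- lintegrals of paths
  set lint : Ω → ℝ≥0∞ := fun ω => ∫⁻ s in Set.Ioc 0 t, ENNReal.ofReal (lam1 (X s ω))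
    with hlintdef
  set gint : Ω → ℝ≥0∞ := fun ω => ∫⁻ s in Set.Ioc 0 t, ENNReal.ofReal (gam1 (X s ω))
    with hgintdef
  have hJlam : Measurable (fun q : Ω × ℝ => ENNReal.ofReal (lam1 (X q.2 q.1))) :=
    ((measurable_of_countable _).comp (JM.comp measurable_swap)).ennreal_ofReal
  have hJgam : Measurable (fun q : Ω × ℝ => ENNReal.ofReal (gam1 (X q.2 q.1))) :=
    ((measurable_of_countable _).comp (JM.comp measurable_swap)).ennreal_ofReal
  have hlintm : Measurable lint := by
    rw [hlintdef]
    exact Measurable.lintegral_prod_right' (f := fun q : Ω × ℝ =>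
      ENNReal.ofReal (lam1 (X q.2 q.1))) hJlam
  have hgintm : Measurable gint := by
    rw [hgintdef]
    exact Measurable.lintegral_prod_right' (f := fun q : Ω × ℝ =>
      ENNReal.ofReal (gam1 (X q.2 q.1))) hJgam
  -- Tonelli
  have hTon : ∫⁻ ω, lint ω ∂μ
      = ∫⁻ s in Set.Ioc 0 t, (∫⁻ ω, ENNReal.ofReal (lam1 (X s ω)) ∂μ) := by
    rw [hlintdef]
    exact lintegral_lintegral_swap hJlam.aemeasurable
  have hinner : ∀ s : ℝ, (∫⁻ ω, ENNReal.ofReal (lam1 (X s ω)) ∂μ)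
      = ENNReal.ofReal (∫ ω, lam1 (X s ω) ∂μ) := fun s =>
    (ofReal_integral_eq_lintegral_ofReal (hlamint s)
      (Eventually.of_forall fun ω => hlam1 _)).symm
  have hEII : IntegrableOn (fun s => ∫ ω, lam1 (X s ω) ∂μ) (Set.Ioc 0 t) volume :=
    (hlamII t ht).1
  have hfin : (∫⁻ ω, lint ω ∂μ) ≠ ∞ := by
    rw [hTon]
    have h2 : (∫⁻ s in Set.Ioc 0 t, (∫⁻ ω, ENNReal.ofReal (lam1 (X s ω)) ∂μ))
        = ∫⁻ s in Set.Ioc 0 t, ENNReal.ofReal (∫ ω, lam1 (X s ω) ∂μ) :=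
      lintegral_congr fun s => hinner s
    rw [h2]
    have h3 := hEII.2
    rw [hasFiniteIntegral_iff_ofReal (Eventually.of_forall fun s => integral_nonneg fun ω => hlam1 _)] at h3
    exact h3.ne
  have hlae : ∀ᵐ ω ∂μ, lint ω < ∞ := ae_lt_top hlintm hfin
  have hRHS2 : ∫ s in (0:ℝ)..t, (∫ ω, lam1 (X s ω) ∂μ) = (∫⁻ ω, lint ω ∂μ).toReal := by
    rw [hTon, intervalIntegral.integral_of_le ht,
      integral_eq_lintegral_of_nonneg_ae
        (Eventually.of_forall fun s => integral_nonneg fun ω => hlam1 _)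
        hEII.aestronglyMeasurable]
    congr 1
    exact (lintegral_congr fun s => hinner s).symm
  -- the bad set is null
  have hBnull : μ {ω | lint ω ≠ ∞ ∧ gint ω = ∞} = 0 := by
    apply doob_sup ℱ hmart' t ht
    rintro ω ⟨hωl, hωg⟩ K
    obtain ⟨n, j, hj, hKle⟩ := path_sup lam1 gam1 hlam1 hgam1 N hN t ht
      (fun s => X s ω) (hpathm ω) (fun s => hcadlag ω s) hωl hωg K
    exact ⟨n, j, hj, by rw [hMt]; exact hKle⟩
  have hgae : ∀ᵐ ω ∂μ, gint ω ≠ ∞ := by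
    have h1 : {ω | gint ω = ∞} ⊆ {ω | lint ω ≠ ∞ ∧ gint ω = ∞} ∪ {ω | lint ω = ∞} := by
      intro ω hω
      by_cases h : lint ω = ∞
      · exact Or.inr h
      · exact Or.inl ⟨h, hω⟩
    have h2 : μ {ω | lint ω = ∞} = 0 := by
      have := ae_iff.1 hlae
      simpa [lt_top_iff_ne_top] using this
    rw [ae_iff]
    refine le_antisymm ?_ zero_le
    calc μ {ω | ¬ gint ω ≠ ∞} ≤ μ ({ω | lint ω ≠ ∞ ∧ gint ω = ∞} ∪ {ω | lint ω = ∞}) := by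
          apply measure_mono
          intro ω hω
          simp only [Set.mem_setOf_eq, not_not] at hω
          exact h1 hω
      _ ≤ μ {ω | lint ω ≠ ∞ ∧ gint ω = ∞} + μ {ω | lint ω = ∞} := measure_union_le _ _
      _ = 0 := by rw [hBnull, h2, add_zero]
  -- pointwise inequality
  set It : Ω → ℝ := fun ω => ∫ s in (0:ℝ)..t, (if 1 ≤ (X s ω).1 then (1:ℝ) else 0) with hItdef
  have hpt : ∀ᵐ ω ∂μ, γ * (N : ℝ) * It ω ≤ M t ω + ((X 0 ω).1 : ℝ) + (lint ω).toReal := by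
    filter_upwards [hlae, hgae] with ω hω1 hω2
    have hgsm : AEStronglyMeasurable (fun s => gam1 (X s ω))
        (volume.restrict (Set.Ioc 0 t)) :=
      ((measurable_of_countable _).comp (hpathm ω)).aestronglyMeasurable
    have hlsm : AEStronglyMeasurable (fun s => lam1 (X s ω))
        (volume.restrict (Set.Ioc 0 t)) :=
      ((measurable_of_countable _).comp (hpathm ω)).aestronglyMeasurable
    have hgInt : IntegrableOn (fun s => gam1 (X s ω)) (Set.Ioc 0 t) := by
      refine ⟨hgsm, ?_⟩
      rw [hasFiniteIntegral_iff_ofReal (ae_of_all _ fun s => hgam1 _)]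
      exact lt_top_iff_ne_top.2 hω2
    have hlInt : IntegrableOn (fun s => lam1 (X s ω)) (Set.Ioc 0 t) := by
      refine ⟨hlsm, ?_⟩
      rw [hasFiniteIntegral_iff_ofReal (ae_of_all _ fun s => hlam1 _)]
      exact hω1
    have hgII : IntervalIntegrable (fun s => gam1 (X s ω)) volume 0 t :=
      (intervalIntegrable_iff_integrableOn_Ioc_of_le ht).2 hgInt
    have hlII : IntervalIntegrable (fun s => lam1 (X s ω)) volume 0 t :=
      (intervalIntegrable_iff_integrableOn_Ioc_of_le ht).2 hlInt
    have hiInt : IntervalIntegrable (fun s => if 1 ≤ (X s ω).1 then (1:ℝ) else 0) volume 0 t := by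
      rw [intervalIntegrable_iff_integrableOn_Ioc_of_le ht]
      refine Integrable.mono' (integrable_const 1)
        (((measurable_of_countable (fun p : ℕ × ℕ => if 1 ≤ p.1 then (1:ℝ) else 0)).comp
          (hpathm ω)).aestronglyMeasurable) ?_
      refine ae_of_all _ fun s => ?_
      by_cases h : 1 ≤ (X s ω).1 <;> simp [h]
    have hMexp : M t ω = ((X t ω).1 : ℝ) - ((X 0 ω).1 : ℝ)
        - ((∫ s in (0:ℝ)..t, lam1 (X s ω)) - (N : ℝ) * ∫ s in (0:ℝ)..t, gam1 (X s ω)) := by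
      rw [hMt]
      congr 1
      rw [intervalIntegral.integral_sub hlII (hgII.const_mul _),
        intervalIntegral.integral_const_mul]
    have hLval : ∫ s in (0:ℝ)..t, lam1 (X s ω) = (lint ω).toReal := by
      rw [intervalIntegral.integral_of_le ht,
        integral_eq_lintegral_of_nonneg_ae (ae_of_all _ fun s => hlam1 _) hlsm]
    have hγI : γ * It ω ≤ ∫ s in (0:ℝ)..t, gam1 (X s ω) := by
      rw [hItdef, ← intervalIntegral.integral_const_mul]
      apply intervalIntegral.integral_mono_on ht (hiInt.const_mul γ) hgII
      intro s hs
      by_cases h : 1 ≤ (X s ω).1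
      · simp only [h, if_true, mul_one]
        exact hγle _ h
      · simp only [h, if_false, mul_zero]
        exact hgam1 _
    have hIt0 : 0 ≤ It ω := by
      rw [hItdef]
      apply intervalIntegral.integral_nonneg ht
      intro s hs
      by_cases h : 1 ≤ (X s ω).1 <;> simp [h]
    have hNγI : γ * (N : ℝ) * It ω ≤ (N : ℝ) * ∫ s in (0:ℝ)..t, gam1 (X s ω) := by
      have h1 : γ * (N : ℝ) * It ω = (N : ℝ) * (γ * It ω) := by ring
      rw [h1]
      apply mul_le_mul_of_nonneg_left hγI (Nat.cast_nonneg N)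
    have hX1t : (0:ℝ) ≤ ((X t ω).1 : ℝ) := Nat.cast_nonneg _
    rw [hMexp, hLval]
    linarith
  -- integrability of both sides
  have hItm : Measurable It := by
    have h1 : It = fun ω => ∫ s in Set.Ioc 0 t, (if 1 ≤ (X s ω).1 then (1:ℝ) else 0) := by
      funext ω
      simp only [hItdef]
      rw [intervalIntegral.integral_of_le ht]
    rw [h1]
    have h2 : StronglyMeasurable (fun q : Ω × ℝ => (if 1 ≤ (X q.2 q.1).1 then (1:ℝ) else 0)) :=
      (((measurable_of_countable (fun p : ℕ × ℕ => if 1 ≤ p.1 then (1:ℝ) else 0)).comp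
        (JM.comp measurable_swap))).stronglyMeasurable
    exact h2.integral_prod_right'.measurable
  have hIint : Integrable It μ := by
    refine Integrable.mono' (integrable_const (|t| : ℝ)) hItm.aestronglyMeasurable ?_
    refine ae_of_all _ fun ω => ?_
    rw [hItdef]
    have h1 := intervalIntegral.norm_integral_le_of_norm_le_const
      (C := 1) (a := (0:ℝ)) (b := t) (f := fun s => if 1 ≤ (X s ω).1 then (1:ℝ) else 0) ?_
    · simpa using h1
    · intro s hs
      by_cases h : 1 ≤ (X s ω).1 <;> simp [h]
  have hLintR : Integrable (fun ω => (lint ω).toReal) μ :=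
    integrable_toReal_of_lintegral_ne_top hlintm.aemeasurable hfin
  have hMtint : Integrable (M t) μ := hmart'.integrable t
  -- integrate the pointwise bound
  have hfinal := integral_mono_ae (hIint.const_mul (γ * (N:ℝ)))
    ((hMtint.add h0int).add hLintR) hpt
  have hLR : ∫ ω, (lint ω).toReal ∂μ = (∫⁻ ω, lint ω ∂μ).toReal :=
    integral_toReal hlintm.aemeasurable hlae
  have e1 : ∫ ω, γ * (N:ℝ) * It ω ∂μ = γ * (N:ℝ) * ∫ ω, It ω ∂μ :=
    integral_const_mul _ _
  have e2 : ∫ a, ((M t + fun ω => ((X 0 ω).1 : ℝ)) + fun ω => (lint ω).toReal) a ∂μ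
      = (∫ a, (M t a + ((X 0 a).1 : ℝ)) ∂μ) + ∫ ω, (lint ω).toReal ∂μ :=
    integral_add (hMtint.add h0int) hLintR
  have e3 : ∫ a, (M t a + ((X 0 a).1 : ℝ)) ∂μ
      = (∫ a, M t a ∂μ) + ∫ ω, ((X 0 ω).1 : ℝ) ∂μ :=
    integral_add hMtint h0int
  rw [e1, e2, e3, hEM, hLR] at hfinal
  rw [hRHS2]
  linarith
end

section
/- Assume γ̲ := inf{γ₁(x₁,x₂) : x₁ ≥ 1, x₂ ≥ 0} > 0 and that λ₁ is bounded by a constant K. For each N ≥ 1, let (X₁ᴺ, X₂ᴺ) be an ℕ²-valued càdlàg adapted process satisfying the martingale property for B_N with the function f(x₁,x₂) = x₁, with E[X₁ᴺ(0)] < ∞. Then for every T > 0: N · E[∫₀ᵀ 1_{X₁ᴺ(s) ≥ 1} ds] ≤ (E[X₁ᴺ(0)] + K T)/γ̲. Consequently, if sup_N E[X₁ᴺ(0)] < ∞, then E[∫₀ᵀ 1_{X₁ᴺ(s) ≥ 1} ds] → 0 as N → ∞, i.e. the first component converges to 0 in L¹(Ω×[0,T]). -/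
open MeasureTheory Filter
open scoped ENNReal

lemma meas_of_rightCont {x : ℝ → ℕ × ℕ}
    (hx : ∀ t, ContinuousWithinAt x (Set.Ici t) t) (φ : ℕ × ℕ → ℝ) :
    Measurable fun s => φ (x s) := by
  set r : ℕ → ℝ → ℝ := fun n s => ((⌈s * 2 ^ n⌉ : ℤ) : ℝ) / 2 ^ n with hr
  have hpos : ∀ n : ℕ, (0:ℝ) < 2 ^ n := fun n => by positivity
  have hmono : ∀ n, Monotone (r n) := by
    intro n a b hab
    have h1 : (⌈a * 2 ^ n⌉ : ℤ) ≤ ⌈b * 2 ^ n⌉ :=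
      Int.ceil_le_ceil (mul_le_mul_of_nonneg_right hab (hpos n).le)
    have h2 : ((⌈a * 2 ^ n⌉ : ℤ) : ℝ) ≤ ((⌈b * 2 ^ n⌉ : ℤ) : ℝ) := by exact_mod_cast h1
    exact div_le_div_of_nonneg_right h2 (hpos n).le |>.trans_eq rfl
  have hcount : ∀ n, (Set.range (r n)).Countable := by
    intro n
    have : Set.range (r n) ⊆ Set.range (fun k : ℤ => ((k : ℝ) / 2 ^ n)) := by
      rintro _ ⟨s, rfl⟩; exact ⟨⌈s * 2 ^ n⌉, rfl⟩
    exact (Set.countable_range _).mono this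
  have hmeasn : ∀ n, Measurable fun s => φ (x (r n s)) := by
    intro n
    haveI : Countable (Set.range (r n)) := (hcount n).to_subtype
    have h1 : Measurable (Set.rangeFactorization (r n)) :=
      ((hmono n).measurable).subtype_mk
    have h2 : Measurable fun y : Set.range (r n) => φ (x (y : ℝ)) :=
      measurable_of_countable _
    exact h2.comp h1
  have hle : ∀ n s, s ≤ r n s := by
    intro n s
    rw [le_div_iff₀ (hpos n)]
    exact Int.le_ceil _
  have hub : ∀ n s, r n s ≤ s + (1/2 : ℝ) ^ n := by
    intro n s
    rw [div_le_iff₀ (hpos n)]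
    have := (Int.ceil_lt_add_one (s * 2 ^ n)).le
    calc ((⌈s * 2 ^ n⌉ : ℤ) : ℝ) ≤ s * 2 ^ n + 1 := this
    _ = (s + (1/2:ℝ)^n) * 2 ^ n := by
        have h2 : ((2:ℝ) ^ n) ≠ 0 := (hpos n).ne'
        field_simp
        have h3 : (2:ℝ) ^ n * (1/2) ^ n = 1 := by rw [← mul_pow]; norm_num
        linear_combination -h3
  have htend : ∀ s, Tendsto (fun n => φ (x (r n s))) atTop (nhds (φ (x s))) := by
    intro s
    have h1 : Tendsto (fun n => r n s) atTop (nhds s) := by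
      have hupper : Tendsto (fun n : ℕ => s + (1/2:ℝ) ^ n) atTop (nhds s) := by
        have := (tendsto_pow_atTop_nhds_zero_of_lt_one (by norm_num : (0:ℝ) ≤ 1/2)
          (by norm_num : (1/2:ℝ) < 1)).const_add s
        simpa using this
      exact tendsto_of_tendsto_of_tendsto_of_le_of_le tendsto_const_nhds hupper
        (fun n => hle n s) (fun n => hub n s)
    have h2 : Tendsto (fun n => r n s) atTop (nhdsWithin s (Set.Ici s)) :=
      tendsto_nhdsWithin_of_tendsto_nhds_of_eventually_within _ h1
        (Eventually.of_forall fun n => hle n s)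
    have h3 : Tendsto (fun n => x (r n s)) atTop (nhds (x s)) := (hx s).tendsto.comp h2
    exact ((continuous_of_discreteTopology (f := φ)).tendsto (x s)).comp h3
  exact measurable_of_tendsto_metrizable hmeasn (tendsto_pi_nhds.mpr htend)

lemma const_of_rightCont {x : ℝ → ℕ × ℕ} {t : ℝ}
    (hx : ContinuousWithinAt x (Set.Ici t) t) :
    ∃ ε > 0, ∀ s ∈ Set.Ico t (t + ε), x s = x t := by
  have h1 : {u : ℝ | x u ∈ ({x t} : Set (ℕ × ℕ))} ∈ nhdsWithin t (Set.Ici t) :=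
    hx ((isOpen_discrete {x t}).mem_nhds rfl)
  rw [Metric.mem_nhdsWithin_iff] at h1
  obtain ⟨ε, hε, hsub⟩ := h1
  refine ⟨ε, hε, fun s hs => ?_⟩
  have : s ∈ Metric.ball t ε ∩ Set.Ici t := by
    constructor
    · rw [Metric.mem_ball, Real.dist_eq, abs_lt]
      constructor <;> [linarith [hs.1]; linarith [hs.2]]
    · exact hs.1
  exact hsub this

lemma doob_sup_condexp {Ω : Type*} {m0 : MeasurableSpace Ω} {μ : Measure Ω}
    [IsProbabilityMeasure μ] (ℱ : Filtration ℝ m0) {H : Ω → ℝ}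
    (hH : Integrable H μ) (hH0 : ∀ ω, 0 ≤ H ω) (qs : ℕ → ℝ) :
    μ {ω | ∀ m : ℕ, ∃ k : ℕ, (m : ℝ) ≤ (μ[H | ℱ (qs k)]) ω} = 0 := by
  classical
  set g : ℕ → Ω → ℝ := fun k => μ[H | ℱ (qs k)] with hg
  set Sv : ℕ → ℕ → Set Ω := fun m k => {ω | (m : ℝ) ≤ g k ω} with hSv
  set key : ℕ → ℝ ×ₗ ℕ := fun k => toLex (qs k, k) with hkey
  have hSmeasF : ∀ m k, MeasurableSet[ℱ (qs k)] (Sv m k) := by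
    intro m k
    exact measurableSet_le measurable_const
      (stronglyMeasurable_condExp (m := ℱ (qs k)) (f := H)).measurable
  have hSmeas : ∀ m k, MeasurableSet (Sv m k) := fun m k => ℱ.le _ _ (hSmeasF m k)
  -- level-m, truncation-n disjointified sets
  set E : ℕ → ℕ → ℕ → Set Ω := fun m n k =>
    Sv m k \ ⋃ j ∈ (Finset.range (n+1)).filter (fun j => key j < key k), Sv m j with hE
  have hEmeasF : ∀ m n k, MeasurableSet[ℱ (qs k)] (E m n k) := by
    intro m n k
    refine (hSmeasF m k).diff ?_
    refine Finset.measurableSet_biUnion _ (fun j hj => ?_)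
    obtain ⟨-, hlt⟩ := Finset.mem_filter.1 hj
    have hle : qs j ≤ qs k := by
      rcases (Prod.Lex.lt_iff (x := toLex (qs j, j)) (y := toLex (qs k, k))).1 hlt with h | h
      · exact h.le
      · exact h.1.le
    exact ℱ.mono hle _ (hSmeasF m j)
  have hEmeas : ∀ m n k, MeasurableSet (E m n k) := fun m n k => ℱ.le _ _ (hEmeasF m n k)
  have hEsub : ∀ m n k, E m n k ⊆ Sv m k := fun m n k => Set.diff_subset
  have hkeyinj : ∀ j k, j ≠ k → key j ≠ key k := by
    intro j k hjk h
    apply hjk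
    have := congrArg (fun p => (ofLex p).2) h
    simpa [hkey] using this
  have hdisj : ∀ m n, (↑(Finset.range (n+1)) : Set ℕ).PairwiseDisjoint (E m n) := by
    intro m n j hj k hk hjk
    rw [Finset.mem_coe] at hj hk
    rcases lt_or_gt_of_ne (hkeyinj j k hjk) with h | h
    · refine Set.disjoint_left.2 fun ω hωj hωk => ?_
      refine hωk.2 ?_
      simp only [Set.mem_iUnion, exists_prop, Finset.mem_filter]
      exact ⟨j, ⟨hj, h⟩, hωj.1⟩
    · refine Set.disjoint_left.2 fun ω hωj hωk => ?_
      refine hωj.2 ?_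
      simp only [Set.mem_iUnion, exists_prop, Finset.mem_filter]
      exact ⟨k, ⟨hk, h⟩, hωk.1⟩
  have hcover : ∀ m n, (⋃ k ∈ Finset.range (n+1), E m n k)
      = ⋃ k ∈ Finset.range (n+1), Sv m k := by
    intro m n
    apply Set.Subset.antisymm
    · exact Set.iUnion₂_mono fun k _ => hEsub m n k
    · intro ω hω
      simp only [Set.mem_iUnion, exists_prop] at hω ⊢
      obtain ⟨k0, hk0, hωk0⟩ := hω
      set s : Finset ℕ := (Finset.range (n+1)).filter (fun k => ω ∈ Sv m k) with hs
      have hne : s.Nonempty := ⟨k0, by simp [hs, hk0, hωk0]⟩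
      obtain ⟨k1, hk1, hmin⟩ := Finset.exists_min_image s key hne
      simp only [hs, Finset.mem_filter] at hk1
      refine ⟨k1, hk1.1, hk1.2, ?_⟩
      intro hmem
      simp only [Set.mem_iUnion, exists_prop, Finset.mem_filter] at hmem
      obtain ⟨j, ⟨hjr, hjlt⟩, hωj⟩ := hmem
      have : key k1 ≤ key j := hmin j (by simp [hs, hjr, hωj])
      exact absurd hjlt (not_lt.2 this)
  -- the key quantitative bound
  have hkeybound : ∀ m n : ℕ, (m : ℝ) * (μ (⋃ k ∈ Finset.range (n+1), Sv m k)).toReal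
      ≤ ∫ ω, H ω ∂μ := by
    intro m n
    rw [← hcover m n]
    have hmeasU : μ (⋃ k ∈ Finset.range (n+1), E m n k) = ∑ k ∈ Finset.range (n+1), μ (E m n k) :=
      measure_biUnion_finset (hdisj m n) (fun k _ => hEmeas m n k)
    rw [hmeasU, ENNReal.toReal_sum (fun k _ => measure_ne_top μ _), Finset.mul_sum]
    have hsum : ∑ k ∈ Finset.range (n+1), (m : ℝ) * (μ (E m n k)).toReal
        ≤ ∑ k ∈ Finset.range (n+1), ∫ ω in E m n k, H ω ∂μ := by
      refine Finset.sum_le_sum fun k _ => ?_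
      have h1 : (m : ℝ) * (μ (E m n k)).toReal ≤ ∫ ω in E m n k, g k ω ∂μ := by
        refine setIntegral_ge_of_const_le_real (hEmeas m n k) (measure_ne_top μ _)
          (fun ω hω => (hEsub m n k hω : _)) (integrable_condExp.integrableOn)
      have h2 : ∫ ω in E m n k, g k ω ∂μ = ∫ ω in E m n k, H ω ∂μ :=
        setIntegral_condExp (ℱ.le (qs k)) hH (hEmeasF m n k)
      linarith
    refine hsum.trans ?_
    rw [← integral_biUnion_finset _ (fun k _ => hEmeas m n k)
      (hdisj m n) (fun k _ => hH.integrableOn)]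
    exact setIntegral_le_integral hH (Eventually.of_forall hH0)
  have hint0 : 0 ≤ ∫ ω, H ω ∂μ := integral_nonneg hH0
  have hlevel : ∀ m : ℕ, 1 ≤ m → μ (⋃ k, Sv m k) ≤ ENNReal.ofReal ((∫ ω, H ω ∂μ) / m) := by
    intro m hm
    set B : ℕ → Set Ω := fun n => ⋃ k ∈ Finset.range (n+1), Sv m k with hB
    have hBmono : Monotone B := by
      intro a b hab ω hω
      simp only [hB, Set.mem_iUnion, exists_prop, Finset.mem_range] at hω ⊢
      obtain ⟨k, hk, h⟩ := hω
      exact ⟨k, by omega, h⟩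
    have hUnion : (⋃ k, Sv m k) = ⋃ n, B n := by
      ext ω
      simp only [hB, Set.mem_iUnion, exists_prop, Finset.mem_range]
      constructor
      · rintro ⟨k, h⟩; exact ⟨k, k, by omega, h⟩
      · rintro ⟨n, k, _, h⟩; exact ⟨k, h⟩
    rw [hUnion, hBmono.measure_iUnion]
    refine iSup_le fun n => ?_
    have h1 := hkeybound m n
    have hmpos : (0:ℝ) < m := by exact_mod_cast hm
    have h2 : (μ (B n)).toReal ≤ (∫ ω, H ω ∂μ) / m := by
      rw [le_div_iff₀ hmpos]
      calc (μ (B n)).toReal * m = m * (μ (B n)).toReal := mul_comm _ _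
        _ ≤ _ := h1
    calc μ (B n) = ENNReal.ofReal ((μ (B n)).toReal) :=
          (ENNReal.ofReal_toReal (measure_ne_top μ _)).symm
      _ ≤ _ := ENNReal.ofReal_le_ofReal h2
  have hsubset : ∀ m : ℕ, {ω | ∀ m' : ℕ, ∃ k : ℕ, (m' : ℝ) ≤ g k ω} ⊆ ⋃ k, Sv m k := by
    intro m ω hω
    obtain ⟨k, hk⟩ := hω m
    exact Set.mem_iUnion.2 ⟨k, hk⟩
  have htend : Tendsto (fun m : ℕ => ENNReal.ofReal ((∫ ω, H ω ∂μ) / m)) atTop (nhds 0) := by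
    rw [← ENNReal.ofReal_zero]
    exact (ENNReal.continuous_ofReal.tendsto 0).comp
      (tendsto_const_div_atTop_nhds_zero_nat (∫ ω, H ω ∂μ))
  refine le_antisymm ?_ zero_le
  refine ge_of_tendsto htend ?_
  filter_upwards [eventually_ge_atTop 1] with m hm
  exact (measure_mono (hsubset m)).trans (hlevel m hm)

lemma good_total {F : ℝ → ℝ≥0∞} (hF : Measurable F) (hfin : ∀ s, F s ≠ ∞) {T : ℝ}
    (hT : 0 < T)
    (hrc : ∀ t, ∃ ε > 0, ∀ s ∈ Set.Ico t (t + ε), F s = F t)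
    {S : ℝ≥0∞} (hS : S ≠ ∞)
    (hq : ∀ t, 0 < t → t ≤ T → (∃ q : ℚ, (q : ℝ) = t) →
      (∫⁻ s in Set.Ioc 0 t, F s) ≠ ∞ → (∫⁻ s in Set.Ioc 0 t, F s) ≤ S) :
    (∫⁻ s in Set.Ioc 0 T, F s) ≤ S := by
  set L : ℝ → ℝ≥0∞ := fun t => ∫⁻ s in Set.Ioc 0 t, F s with hL
  have hLmono : Monotone L := fun a b hab =>
    lintegral_mono_set (Set.Ioc_subset_Ioc_right hab)
  have hL0 : L 0 = 0 := by
    simp [hL, Set.Ioc_self]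
  set G : Set ℝ := {t | t ∈ Set.Icc 0 T ∧ L t ≤ S} with hG
  have h0G : (0:ℝ) ∈ G := ⟨⟨le_refl 0, hT.le⟩, by rw [hL0]; exact zero_le⟩
  have hGne : G.Nonempty := ⟨0, h0G⟩
  have hGbdd : BddAbove G := ⟨T, fun t ht => ht.1.2⟩
  set u : ℝ := sSup G with hu
  have hu0 : 0 ≤ u := le_csSup hGbdd h0G
  have huT : u ≤ T := csSup_le hGne fun t ht => ht.1.2
  have hlt : ∀ t, t < u → L t ≤ S := by
    intro t ht
    obtain ⟨t', ht'G, htt'⟩ := exists_lt_of_lt_csSup hGne ht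
    exact (hLmono htt'.le).trans ht'G.2
  have hLu : L u ≤ S := by
    rcases eq_or_lt_of_le hu0 with h | h
    · rw [← h, hL0]; exact zero_le
    -- 0 < u
    set t : ℕ → ℝ := fun n => u - u / (n + 1) with ht
    have htlt : ∀ n, t n < u := by
      intro n
      have : 0 < u / (n + 1) := by positivity
      simp only [ht]; linarith
    have htmono : Monotone t := by
      intro a b hab
      simp only [ht]
      have : u / (b + 1) ≤ u / (a + 1) := by
        apply div_le_div_of_nonneg_left h.le (by positivity)
        exact_mod_cast by omega
      linarith
    have hLuIoo : L u = ∫⁻ s in Set.Ioo 0 u, F s := by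
      rw [hL]
      exact (setLIntegral_congr Ioo_ae_eq_Ioc).symm
    have hcover : (Set.Ioo 0 u).indicator F = fun s => ⨆ n, (Set.Ioc 0 (t n)).indicator F s := by
      funext s
      by_cases hs : s ∈ Set.Ioo 0 u
      · rw [Set.indicator_of_mem hs]
        refine le_antisymm ?_ (iSup_le fun n => ?_)
        · obtain ⟨n, hn⟩ : ∃ n : ℕ, u / (u - s) < n + 1 := by
            obtain ⟨n, hn⟩ := exists_nat_gt (u / (u - s))
            exact ⟨n, hn.trans (by linarith)⟩
          have hus : 0 < u - s := by linarith [hs.2]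
          have : u / (n + 1) < u - s := by
            rw [div_lt_iff₀ (by positivity)]
            rw [div_lt_iff₀ hus] at hn
            linarith [hn]
          have hsn : s ∈ Set.Ioc 0 (t n) := ⟨hs.1, by simp only [ht]; linarith⟩
          exact le_iSup_of_le n (by rw [Set.indicator_of_mem hsn])
        · by_cases hsn : s ∈ Set.Ioc 0 (t n)
          · rw [Set.indicator_of_mem hsn]
          · rw [Set.indicator_of_notMem hsn]; exact zero_le
      · rw [Set.indicator_of_notMem hs]
        refine le_antisymm zero_le (iSup_le fun n => ?_)
        have : s ∉ Set.Ioc 0 (t n) := by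
          intro hmem
          exact hs ⟨hmem.1, lt_of_le_of_lt hmem.2 (htlt n)⟩
        rw [Set.indicator_of_notMem this]
    have : L u = ⨆ n, L (t n) := by
      rw [hLuIoo, ← lintegral_indicator measurableSet_Ioo, hcover,
        lintegral_iSup (fun n => hF.indicator measurableSet_Ioc)
          (fun a b hab s => Set.indicator_le_indicator_of_subset
            (Set.Ioc_subset_Ioc_right (by simpa using htmono hab)) (fun _ => zero_le) s)]
      simp only [hL]
      congr 1
      funext n
      rw [lintegral_indicator measurableSet_Ioc]
    rw [this]
    exact iSup_le fun n => hlt (t n) (htlt n)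
  rcases eq_or_lt_of_le huT with h | h
  · rw [← h]; exact hLu
  -- u < T : derive a contradiction
  exfalso
  obtain ⟨ε, hε, hconst⟩ := hrc u
  obtain ⟨q, hq1, hq2⟩ := exists_rat_btwn (lt_min (lt_add_of_pos_right u hε) h)
  have hq2T : (q:ℝ) ≤ T := (hq2.trans_le (min_le_right _ _)).le
  have hq2ε : (q:ℝ) < u + ε := hq2.trans_le (min_le_left _ _)
  have hsplit : L q = L u + ∫⁻ s in Set.Ioc u q, F s := by
    show (∫⁻ s in Set.Ioc 0 (q:ℝ), F s) = (∫⁻ s in Set.Ioc 0 u, F s) + _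
    rw [← Set.Ioc_union_Ioc_eq_Ioc hu0 hq1.le,
      lintegral_union measurableSet_Ioc (Set.Ioc_disjoint_Ioc_of_le le_rfl)]
  have htail : (∫⁻ s in Set.Ioc u q, F s) = F u * ENNReal.ofReal ((q:ℝ) - u) := by
    rw [setLIntegral_congr_fun measurableSet_Ioc
      (fun s hs => hconst s ⟨hs.1.le, hs.2.trans_lt hq2ε⟩),
      setLIntegral_const, Real.volume_Ioc]
  have hLqfin : L q ≠ ∞ := by
    rw [hsplit, htail]
    exact ENNReal.add_ne_top.2 ⟨(hLu.trans_lt (lt_top_iff_ne_top.2 hS)).ne,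
      ENNReal.mul_ne_top (hfin u) ENNReal.ofReal_ne_top⟩
  have hLqS : L q ≤ S := hq q (hu0.trans_lt hq1) hq2T ⟨q, rfl⟩ hLqfin
  have : (q:ℝ) ∈ G := ⟨⟨hu0.trans hq1.le, hq2T⟩, hLqS⟩
  exact absurd (le_csSup hGbdd this) (not_le.2 hq1)

lemma intervalIntegrable_of_bdd {f : ℝ → ℝ} (hf : Measurable f) {C : ℝ}
    (hC : ∀ s, |f s| ≤ C) (a b : ℝ) : IntervalIntegrable f volume a b :=
  (intervalIntegrable_const (c := C)).mono_fun' hf.aestronglyMeasurable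
    (Eventually.of_forall fun s => by simpa [Real.norm_eq_abs] using hC s)

lemma intervalIntegrable_of_lint {f : ℝ → ℝ} (hf : Measurable f) (h0 : ∀ s, 0 ≤ f s)
    {t : ℝ} (ht : 0 ≤ t) (hL : (∫⁻ s in Set.Ioc 0 t, ENNReal.ofReal (f s)) ≠ ∞) :
    IntervalIntegrable f volume 0 t := by
  rw [intervalIntegrable_iff, Set.uIoc_of_le ht]
  refine ⟨hf.aestronglyMeasurable, ?_⟩
  rw [hasFiniteIntegral_iff_ofReal (Eventually.of_forall h0)]
  exact lt_top_iff_ne_top.2 hL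

lemma ofReal_intervalIntegral_eq_lint {f : ℝ → ℝ} (hf : Measurable f) (h0 : ∀ s, 0 ≤ f s)
    {t : ℝ} (ht : 0 ≤ t) (hL : (∫⁻ s in Set.Ioc 0 t, ENNReal.ofReal (f s)) ≠ ∞) :
    ENNReal.ofReal (∫ s in (0:ℝ)..t, f s) = ∫⁻ s in Set.Ioc 0 t, ENNReal.ofReal (f s) := by
  rw [intervalIntegral.integral_of_le ht,
    integral_eq_lintegral_of_nonneg_ae (Eventually.of_forall h0) hf.aestronglyMeasurable,
    ENNReal.ofReal_toReal hL]
lemma BN_fst (lam1 gam1 lam2 gam2 : ℕ × ℕ → ℝ) (N : ℕ)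
    (hgam10 : ∀ x2 : ℕ, gam1 (0, x2) = 0) (p : ℕ × ℕ) :
    BN lam1 gam1 lam2 gam2 N (fun p => (p.1 : ℝ)) p = lam1 p - (N : ℝ) * gam1 p := by
  rcases p with ⟨x1, x2⟩
  rcases Nat.eq_zero_or_pos x1 with h | h
  · subst h
    simp only [BN, hgam10 x2]
    push_cast
    ring
  · simp only [BN]
    rw [Nat.cast_pred h]
    push_cast
    ring

/-- Assume `γ̲ := inf{γ₁(x₁,x₂) : x₁ ≥ 1} > 0` and `λ₁ ≤ K`. If for every
`N ≥ 1` the process `(X₁ᴺ, X₂ᴺ)` satisfies the martingale property for `B_N` with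
`f(x₁,x₂) = x₁` and integrable initial first component, then for every `T > 0`:
`N · E[∫₀ᵀ 1_{X₁ᴺ(s) ≥ 1} ds] ≤ (E[X₁ᴺ(0)] + K T)/γ̲`; consequently, if the initial means
are bounded uniformly in `N`, then `E[∫₀ᵀ 1_{X₁ᴺ(s) ≥ 1} ds] → 0` as `N → ∞`. -/
theorem stmt_2
    {Ω : Type*} {m0 : MeasurableSpace Ω} {μ : Measure Ω} [IsProbabilityMeasure μ]
    (ℱ : Filtration ℝ m0)
    (lam1 gam1 lam2 gam2 : ℕ × ℕ → ℝ)
    (hlam1 : ∀ p, 0 ≤ lam1 p) (hgam1 : ∀ p, 0 ≤ gam1 p)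
    (hlam2 : ∀ p, 0 ≤ lam2 p) (hgam2 : ∀ p, 0 ≤ gam2 p)
    (hgam10 : ∀ x2 : ℕ, gam1 (0, x2) = 0) (hgam20 : ∀ x1 : ℕ, gam2 (x1, 0) = 0)
    (hinf : 0 < sInf (gam1 '' {p : ℕ × ℕ | 1 ≤ p.1}))
    (K : ℝ) (hK : 0 ≤ K) (hlam1bd : ∀ p, lam1 p ≤ K)
    (X : ℕ → ℝ → Ω → ℕ × ℕ)
    (hadapt : ∀ N, Adapted ℱ (X N))
    (hcadlag : ∀ N ω t, ContinuousWithinAt (fun s => X N s ω) (Set.Ici t) t)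
    (hmart : ∀ N, 1 ≤ N → Martingale
      (fun t ω => ((X N t ω).1 : ℝ) - ((X N 0 ω).1 : ℝ)
        - ∫ s in (0:ℝ)..t,
            BN lam1 gam1 lam2 gam2 N (fun p => (p.1 : ℝ)) (X N s ω)) ℱ μ)
    (h0int : ∀ N, Integrable (fun ω => ((X N 0 ω).1 : ℝ)) μ)
    (T : ℝ) (hT : 0 < T) :
    (∀ N : ℕ, 1 ≤ N →
      (N : ℝ) * (∫ ω, (∫ s in (0:ℝ)..T, if 1 ≤ (X N s ω).1 then (1:ℝ) else 0) ∂μ)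
        ≤ ((∫ ω, ((X N 0 ω).1 : ℝ) ∂μ) + K * T) / sInf (gam1 '' {p : ℕ × ℕ | 1 ≤ p.1})) ∧
    ((∃ C : ℝ, ∀ N, (∫ ω, ((X N 0 ω).1 : ℝ) ∂μ) ≤ C) →
      Tendsto
        (fun N : ℕ => ∫ ω, (∫ s in (0:ℝ)..T, if 1 ≤ (X N s ω).1 then (1:ℝ) else 0) ∂μ)
        atTop (nhds 0)) := by
  set Γ : ℝ := sInf (gam1 '' {p : ℕ × ℕ | 1 ≤ p.1}) with hΓ
  have hΓpos : 0 < Γ := hinf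
  have hΓle : ∀ p : ℕ × ℕ, 1 ≤ p.1 → Γ ≤ gam1 p := by
    intro p hp
    refine csInf_le ⟨0, ?_⟩ ⟨p, hp, rfl⟩
    rintro y ⟨q, -, rfl⟩
    exact hgam1 q
  have key : ∀ N : ℕ, 1 ≤ N →
      (N : ℝ) * (∫ ω, (∫ s in (0:ℝ)..T, if 1 ≤ (X N s ω).1 then (1:ℝ) else 0) ∂μ)
        ≤ ((∫ ω, ((X N 0 ω).1 : ℝ) ∂μ) + K * T) / Γ := by
    intro N hN
    have hE0 : 0 ≤ ∫ ω, ((X N 0 ω).1 : ℝ) ∂μ :=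
      integral_nonneg fun ω => Nat.cast_nonneg _
    by_cases hJint : Integrable
        (fun ω => ∫ s in (0:ℝ)..T, if 1 ≤ (X N s ω).1 then (1:ℝ) else 0) μ
    swap
    · rw [integral_undef hJint, mul_zero]
      exact div_nonneg (add_nonneg hE0 (mul_nonneg hK hT.le)) hΓpos.le
    have hNpos : (0:ℝ) < N := by exact_mod_cast hN
    set M : ℝ → Ω → ℝ := fun t ω => ((X N t ω).1 : ℝ) - ((X N 0 ω).1 : ℝ)
        - ∫ s in (0:ℝ)..t, BN lam1 gam1 lam2 gam2 N (fun p => (p.1 : ℝ)) (X N s ω) with hMdef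
    have hMart : Martingale M ℱ μ := hmart N hN
    have hMTint : Integrable (M T) μ := hMart.integrable T
    -- expectation of M T is zero
    have hEMT : ∫ ω, M T ω ∂μ = 0 := by
      have h1 := hMart.setIntegral_eq (i := 0) (j := T) hT.le
        (s := Set.univ) (@MeasurableSet.univ _ (ℱ 0))
      rw [Measure.restrict_univ] at h1
      have h0 : ∫ ω, M 0 ω ∂μ = 0 := by
        have : ∀ ω, M 0 ω = 0 := by
          intro ω
          show ((X N 0 ω).1 : ℝ) - ((X N 0 ω).1 : ℝ) - ∫ s in (0:ℝ)..(0:ℝ), _ = 0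
          rw [intervalIntegral.integral_same]
          ring
        simp only [this, integral_zero]
      rw [← h1, h0]
    -- Doob setup
    obtain ⟨e, he⟩ := exists_surjective_nat ℚ
    set qs : ℕ → ℝ := fun k => min (max ((e k : ℝ)) 0) T with hqs
    have hqs0 : ∀ k, 0 ≤ qs k := fun k => le_min (le_max_right _ _) hT.le
    have hqsT : ∀ k, qs k ≤ T := fun k => min_le_right _ _
    have hqs_surj : ∀ t : ℝ, 0 ≤ t → t ≤ T → ∀ q : ℚ, (q : ℝ) = t → ∃ k, qs k = t := by
      intro t ht0 htT q hq
      obtain ⟨k, hk⟩ := he q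
      refine ⟨k, ?_⟩
      show min (max ((e k : ℝ)) 0) T = t
      rw [hk, hq, max_eq_left ht0, min_eq_left htT]
    set H : Ω → ℝ := fun ω => |M T ω| with hH
    have hHint : Integrable H μ := hMTint.abs
    have hdoob := doob_sup_condexp ℱ hHint (fun ω => abs_nonneg _) qs
    set g : ℕ → Ω → ℝ := fun k => μ[H | ℱ (qs k)] with hg
    have hMq : ∀ k, ∀ᵐ ω ∂μ, |M (qs k) ω| ≤ g k ω := by
      intro k
      have h1 : μ[M T | ℱ (qs k)] =ᵐ[μ] M (qs k) := hMart.2 (qs k) T (hqsT k)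
      have h2 : μ[M T | ℱ (qs k)] ≤ᵐ[μ] g k :=
        condExp_mono hMTint hHint (Eventually.of_forall fun ω => le_abs_self _)
      have h3 : μ[-(M T) | ℱ (qs k)] ≤ᵐ[μ] g k :=
        condExp_mono hMTint.neg hHint (Eventually.of_forall fun ω => by show -(M T ω) ≤ |M T ω|; exact neg_le_abs _)
      have h4 := condExp_neg (μ := μ) (M T) (ℱ (qs k))
      filter_upwards [h1, h2, h3, h4] with ω e1 e2 e3 e4
      rw [← e1, abs_le]
      refine ⟨?_, e2⟩
      rw [e4] at e3
      simp only [Pi.neg_apply] at e3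
      linarith
    have hae_bdd : ∀ᵐ ω ∂μ, ∃ m : ℕ, ∀ k, g k ω < m := by
      rw [ae_iff]
      have hset : {ω | ¬ ∃ m : ℕ, ∀ k, g k ω < m}
          = {ω | ∀ m : ℕ, ∃ k : ℕ, (m : ℝ) ≤ g k ω} := by
        ext ω
        simp only [Set.mem_setOf_eq, not_exists, not_forall, not_lt]
      rw [hset]
      exact hdoob
    -- main pointwise bound
    have hcore : ∀ᵐ ω ∂μ, (N : ℝ) * Γ *
        (∫ s in (0:ℝ)..T, if 1 ≤ (X N s ω).1 then (1:ℝ) else 0)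
          ≤ M T ω + ((X N 0 ω).1 : ℝ) + K * T := by
      filter_upwards [hae_bdd, ae_all_iff.2 hMq] with ω hbdd hMqω
      obtain ⟨m, hm⟩ := hbdd
      have hxrc := hcadlag N ω
      have hmeasγ : Measurable fun s => (N : ℝ) * gam1 (X N s ω) :=
        meas_of_rightCont hxrc (fun p => (N : ℝ) * gam1 p)
      have hγ0 : ∀ s, 0 ≤ (N : ℝ) * gam1 (X N s ω) :=
        fun s => mul_nonneg hNpos.le (hgam1 _)
      have hmeaslam : Measurable fun s => lam1 (X N s ω) :=
        meas_of_rightCont hxrc lam1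
      have hlambd : ∀ s, |lam1 (X N s ω)| ≤ K := fun s =>
        abs_le.2 ⟨by linarith [hlam1 (X N s ω)], hlam1bd _⟩
      have hlamint : ∀ t : ℝ, IntervalIntegrable (fun s => lam1 (X N s ω)) volume 0 t :=
        fun t => intervalIntegrable_of_bdd hmeaslam hlambd 0 t
      have hlamle : ∀ t, 0 ≤ t → t ≤ T →
          (∫ s in (0:ℝ)..t, lam1 (X N s ω)) ≤ K * T := by
        intro t h0 hT'
        have h1 := intervalIntegral.integral_mono_on h0 (hlamint t)
          (intervalIntegrable_const (c := K)) (fun s _ => hlam1bd _)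
        rw [intervalIntegral.integral_const, smul_eq_mul] at h1
        nlinarith
      set F : ℝ → ℝ≥0∞ := fun s => ENNReal.ofReal ((N : ℝ) * gam1 (X N s ω)) with hF
      have hFmeas : Measurable F := hmeasγ.ennreal_ofReal
      have hγint : ∀ t : ℝ, 0 ≤ t → (∫⁻ s in Set.Ioc 0 t, F s) ≠ ∞ →
          IntervalIntegrable (fun s => (N : ℝ) * gam1 (X N s ω)) volume 0 t :=
        fun t ht hfin => intervalIntegrable_of_lint hmeasγ hγ0 ht hfin
      have hDval : ∀ t : ℝ,
          IntervalIntegrable (fun s => (N : ℝ) * gam1 (X N s ω)) volume 0 t →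
          (∫ s in (0:ℝ)..t, (N : ℝ) * gam1 (X N s ω))
            = M t ω + ((X N 0 ω).1 : ℝ) + (∫ s in (0:ℝ)..t, lam1 (X N s ω))
              - ((X N t ω).1 : ℝ) := by
        intro t hint
        have hIt : (∫ s in (0:ℝ)..t, BN lam1 gam1 lam2 gam2 N (fun p => (p.1 : ℝ)) (X N s ω))
            = (∫ s in (0:ℝ)..t, lam1 (X N s ω))
              - ∫ s in (0:ℝ)..t, (N : ℝ) * gam1 (X N s ω) := by
          rw [intervalIntegral.integral_congr
            (g := fun s => lam1 (X N s ω) - (N : ℝ) * gam1 (X N s ω))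
            (fun s _ => BN_fst lam1 gam1 lam2 gam2 N hgam10 (X N s ω))]
          exact intervalIntegral.integral_sub (hlamint t) hint
        have hMt : M t ω = ((X N t ω).1 : ℝ) - ((X N 0 ω).1 : ℝ)
            - ((∫ s in (0:ℝ)..t, lam1 (X N s ω))
              - ∫ s in (0:ℝ)..t, (N : ℝ) * gam1 (X N s ω)) := by
          rw [← hIt]
        linarith
      have hqhyp : ∀ t, 0 < t → t ≤ T → (∃ q : ℚ, (q : ℝ) = t) →
          (∫⁻ s in Set.Ioc 0 t, F s) ≠ ∞ →
          (∫⁻ s in Set.Ioc 0 t, F s)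
            ≤ ENNReal.ofReal ((m : ℝ) + ((X N 0 ω).1 : ℝ) + K * T) := by
        rintro t ht0 htT ⟨q, hq⟩ hfin
        obtain ⟨k, hk⟩ := hqs_surj t ht0.le htT q hq
        have hint := hγint t ht0.le hfin
        have hD := hDval t hint
        have hMb : |M t ω| ≤ g k ω := by rw [← hk]; exact hMqω k
        have hDle : (∫ s in (0:ℝ)..t, (N : ℝ) * gam1 (X N s ω))
            ≤ (m : ℝ) + ((X N 0 ω).1 : ℝ) + K * T := by
          have h1 : M t ω ≤ |M t ω| := le_abs_self _
          have h2 := hlamle t ht0.le htT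
          have h3 : (0:ℝ) ≤ ((X N t ω).1 : ℝ) := Nat.cast_nonneg _
          have h4 := hm k
          linarith
        rw [← ofReal_intervalIntegral_eq_lint hmeasγ hγ0 ht0.le hfin]
        exact ENNReal.ofReal_le_ofReal hDle
      have hrcF : ∀ t, ∃ ε > 0, ∀ s ∈ Set.Ico t (t + ε), F s = F t := by
        intro t
        obtain ⟨ε, hε, hconst⟩ := const_of_rightCont (hxrc t)
        exact ⟨ε, hε, fun s hs => by show ENNReal.ofReal _ = ENNReal.ofReal _; rw [hconst s hs]⟩
      have hLT := good_total hFmeas (fun s => ENNReal.ofReal_ne_top) hT hrcF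
        (S := ENNReal.ofReal ((m : ℝ) + ((X N 0 ω).1 : ℝ) + K * T))
        ENNReal.ofReal_ne_top hqhyp
      have hγTfin : (∫⁻ s in Set.Ioc 0 T, F s) ≠ ∞ :=
        (hLT.trans_lt (lt_top_iff_ne_top.2 ENNReal.ofReal_ne_top)).ne
      have hγTint := hγint T hT.le hγTfin
      have hDT := hDval T hγTint
      -- indicator bound
      have hmeasInd : Measurable fun s =>
          (N : ℝ) * Γ * (if 1 ≤ (X N s ω).1 then (1:ℝ) else 0) :=
        meas_of_rightCont hxrc (fun p => (N : ℝ) * Γ * (if 1 ≤ p.1 then (1:ℝ) else 0))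
      have hindbd : ∀ s, |(N : ℝ) * Γ * (if 1 ≤ (X N s ω).1 then (1:ℝ) else 0)|
          ≤ (N : ℝ) * Γ := by
        intro s
        by_cases h : 1 ≤ (X N s ω).1
        · rw [if_pos h, mul_one, abs_of_nonneg (mul_nonneg hNpos.le hΓpos.le)]
        · rw [if_neg h, mul_zero, abs_zero]
          exact mul_nonneg hNpos.le hΓpos.le
      have hindint : IntervalIntegrable
          (fun s => (N : ℝ) * Γ * (if 1 ≤ (X N s ω).1 then (1:ℝ) else 0)) volume 0 T :=
        intervalIntegrable_of_bdd hmeasInd hindbd 0 T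
      have hmono := intervalIntegral.integral_mono_on hT.le hindint hγTint
        (fun s _ => by
          by_cases h : 1 ≤ (X N s ω).1
          · rw [if_pos h, mul_one]
            exact mul_le_mul_of_nonneg_left (hΓle _ h) hNpos.le
          · rw [if_neg h, mul_zero]
            exact hγ0 s)
      rw [intervalIntegral.integral_const_mul] at hmono
      have hA := hlamle T hT.le le_rfl
      have hXT : (0:ℝ) ≤ ((X N T ω).1 : ℝ) := Nat.cast_nonneg _
      linarith
    -- integrate the pointwise bound
    have hint1 : Integrable (fun ω => (N : ℝ) * Γ *
        (∫ s in (0:ℝ)..T, if 1 ≤ (X N s ω).1 then (1:ℝ) else 0)) μ :=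
      hJint.const_mul _
    have hint2 : Integrable (fun ω => M T ω + ((X N 0 ω).1 : ℝ) + K * T) μ :=
      (hMTint.add (h0int N)).add (integrable_const _)
    have hineq := integral_mono_ae hint1 hint2 hcore
    rw [integral_const_mul] at hineq
    have hf2 : Integrable (fun ω => M T ω + ((X N 0 ω).1 : ℝ)) μ := hMTint.add (h0int N)
    have hRHS : ∫ ω, (M T ω + ((X N 0 ω).1 : ℝ) + K * T) ∂μ
        = (∫ ω, ((X N 0 ω).1 : ℝ) ∂μ) + K * T := by
      rw [integral_add hf2 (integrable_const _),
        integral_add hMTint (h0int N), hEMT, integral_const]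
      simp
    rw [hRHS] at hineq
    rw [le_div_iff₀ hΓpos]
    nlinarith [hineq]
  refine ⟨key, ?_⟩
  rintro ⟨C, hC⟩
  have hub : ∀ᶠ N : ℕ in atTop,
      (∫ ω, (∫ s in (0:ℝ)..T, if 1 ≤ (X N s ω).1 then (1:ℝ) else 0) ∂μ)
        ≤ ((C + K * T) / Γ) / N := by
    filter_upwards [eventually_ge_atTop 1] with N hN
    have h1 := key N hN
    have hNpos : (0:ℝ) < N := by exact_mod_cast hN
    have h2 : ((∫ ω, ((X N 0 ω).1 : ℝ) ∂μ) + K * T) / Γ ≤ (C + K * T) / Γ := by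
      have h3 : (∫ ω, ((X N 0 ω).1 : ℝ) ∂μ) + K * T ≤ C + K * T := by linarith [hC N]
      exact (div_le_div_iff_of_pos_right hΓpos).2 h3
    rw [le_div_iff₀ hNpos]
    calc (∫ ω, (∫ s in (0:ℝ)..T, if 1 ≤ (X N s ω).1 then (1:ℝ) else 0) ∂μ) * N
        = (N:ℝ) * (∫ ω, (∫ s in (0:ℝ)..T, if 1 ≤ (X N s ω).1 then (1:ℝ) else 0) ∂μ) :=
          mul_comm _ _
      _ ≤ _ := h1.trans h2
  have hlb : ∀ᶠ N : ℕ in atTop,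
      (0:ℝ) ≤ ∫ ω, (∫ s in (0:ℝ)..T, if 1 ≤ (X N s ω).1 then (1:ℝ) else 0) ∂μ := by
    refine Eventually.of_forall fun N => integral_nonneg fun ω => ?_
    refine intervalIntegral.integral_nonneg hT.le fun s _ => ?_
    split <;> norm_num
  have htend0 : Tendsto (fun N : ℕ => ((C + K * T) / Γ) / N) atTop (nhds 0) :=
    tendsto_const_div_atTop_nhds_zero_nat _
  exact tendsto_of_tendsto_of_tendsto_of_le_of_le' tendsto_const_nhds htend0 hlb hub
end

section
/- Let g₁, g₂, k₂ > 0, let λ₁ : [0,∞) → [0,∞), let h be a probability density on [0,∞), let n ≥ 1, and let g : ℝ → ℝ be differentiable and bounded. Define f : [0,∞)² → ℝ by f(x₁,x₂) = g(x₂ + (k₂/g₁)x₁), and let Aⁿ be the generator with parameters (ĝ₁, k̂₂, λ̂₁, ĥ) = (n g₁, n k₂, λ₁, h) (the scaling (S3)). Then for all (x₁,x₂) ∈ [0,∞)², writing u = x₂ + (k₂/g₁)x₁: Aⁿ f(x₁,x₂) = −g₂ x₂ g′(u) + λ₁(x₂)(∫₀^∞ h(z) g(u + (k₂/g₁)z)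 dz − g(u)). In particular Aⁿ f does not depend on n, and by the change of variables w = (k₂/g₁)z the jump term can be written with the rescaled density h̄(w) = (g₁/k₂) h((g₁/k₂)w): Aⁿ f(x₁,x₂) = −g₂ x₂ g′(u) + λ₁(x₂)(∫₀^∞ h̄(w) g(u + w) dw − g(u)). -/
open MeasureTheory Filter

/-- The generator `A[ĝ₁, k̂₂, λ̂₁, ĥ]` of the piecewise deterministic model of gene
expression with bursting: for a `C¹` function `f : [0,∞)² → ℝ`,
`A f(x₁,x₂) = −ĝ₁x₁ ∂f/∂x₁ + (k̂₂x₁ − g₂x₂) ∂f/∂x₂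
  + λ̂₁(x₂)(∫₀^∞ ĥ(z) f(x₁+z,x₂) dz − f(x₁,x₂))`. -/
noncomputable def genA (g2 g1h k2h : ℝ) (lam1h : ℝ → ℝ) (hh : ℝ → ℝ)
    (f : ℝ × ℝ → ℝ) (p : ℝ × ℝ) : ℝ :=
  -g1h * p.1 * fderiv ℝ f p (1, 0) + (k2h * p.1 - g2 * p.2) * fderiv ℝ f p (0, 1)
    + lam1h p.2 * ((∫ z in Set.Ioi (0:ℝ), hh z * f (p.1 + z, p.2)) - f p)

/-- Under the scaling (S3), `Aⁿ = A[ng₁, nk₂, λ₁, h]`, for the test function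
`f(x₁,x₂) = g(x₂ + (k₂/g₁)x₁)` with `g` differentiable and bounded, writing
`u = x₂ + (k₂/g₁)x₁`:
`Aⁿf(x₁,x₂) = −g₂x₂ g′(u) + λ₁(x₂)(∫₀^∞ h(z) g(u + (k₂/g₁)z) dz − g(u))`,
independently of `n`, and with the rescaled density `h̄(w) = (g₁/k₂)h((g₁/k₂)w)` this equals
`−g₂x₂ g′(u) + λ₁(x₂)(∫₀^∞ h̄(w) g(u + w) dw − g(u))`. -/
theorem stmt_6
    (g₁ g₂ k₂ : ℝ) (hg₁ : 0 < g₁) (hg₂ : 0 < g₂) (hk₂ : 0 < k₂)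
    (lam1 : ℝ → ℝ) (hlam1 : ∀ x : ℝ, 0 ≤ x → 0 ≤ lam1 x)
    (h : ℝ → ℝ) (hhmeas : Measurable h) (hhpos : ∀ z, 0 ≤ h z)
    (hhdens : (∫ z in Set.Ioi (0:ℝ), h z) = 1)
    (n : ℕ) (hn : 1 ≤ n)
    (g : ℝ → ℝ) (hg : Differentiable ℝ g) (hgb : ∃ M : ℝ, ∀ x, |g x| ≤ M)
    (x₁ x₂ : ℝ) (hx₁ : 0 ≤ x₁) (hx₂ : 0 ≤ x₂) :
    genA g₂ ((n : ℝ) * g₁) ((n : ℝ) * k₂) lam1 h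
        (fun p => g (p.2 + (k₂ / g₁) * p.1)) (x₁, x₂)
      = -g₂ * x₂ * deriv g (x₂ + (k₂ / g₁) * x₁)
        + lam1 x₂ *
          ((∫ z in Set.Ioi (0:ℝ), h z * g ((x₂ + (k₂ / g₁) * x₁) + (k₂ / g₁) * z))
            - g (x₂ + (k₂ / g₁) * x₁)) ∧
    genA g₂ ((n : ℝ) * g₁) ((n : ℝ) * k₂) lam1 h
        (fun p => g (p.2 + (k₂ / g₁) * p.1)) (x₁, x₂)
      = -g₂ * x₂ * deriv g (x₂ + (k₂ / g₁) * x₁)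
        + lam1 x₂ *
          ((∫ w in Set.Ioi (0:ℝ), (g₁ / k₂) * h ((g₁ / k₂) * w) * g ((x₂ + (k₂ / g₁) * x₁) + w))
            - g (x₂ + (k₂ / g₁) * x₁)) := by
  set c : ℝ := k₂ / g₁ with hc
  have hcpos : 0 < c := div_pos hk₂ hg₁
  set u : ℝ := x₂ + c * x₁ with hu
  -- the linear part
  set L : ℝ × ℝ →L[ℝ] ℝ :=
    ContinuousLinearMap.snd ℝ ℝ ℝ + c • ContinuousLinearMap.fst ℝ ℝ ℝ with hL
  have hLderiv : HasFDerivAt (fun p : ℝ × ℝ => p.2 + c * p.1) L (x₁, x₂) := by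
    have : (fun p : ℝ × ℝ => p.2 + c * p.1) = fun p => L p := by
      ext p; simp [hL, mul_comm]
    rw [this]
    exact L.hasFDerivAt
  have hfd : HasFDerivAt (fun p : ℝ × ℝ => g (p.2 + c * p.1))
      ((deriv g u) • L) (x₁, x₂) := by
    have hgd : HasDerivAt g (deriv g u) u := (hg u).hasDerivAt
    exact hgd.comp_hasFDerivAt (x₁, x₂) hLderiv
  have hfderiv : fderiv ℝ (fun p : ℝ × ℝ => g (p.2 + c * p.1)) (x₁, x₂)
      = (deriv g u) • L := hfd.fderiv
  have hL10 : L (1, 0) = c := by simp [hL]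
  have hL01 : L (0, 1) = 1 := by simp [hL]
  have hgen : genA g₂ ((n : ℝ) * g₁) ((n : ℝ) * k₂) lam1 h
      (fun p => g (p.2 + c * p.1)) (x₁, x₂)
      = -g₂ * x₂ * deriv g u
        + lam1 x₂ * ((∫ z in Set.Ioi (0:ℝ), h z * g (u + c * z)) - g u) := by
    unfold genA
    rw [hfderiv]
    simp only [ContinuousLinearMap.smul_apply, hL10, hL01, smul_eq_mul]
    have h1 : -((n : ℝ) * g₁) * x₁ * (deriv g u * c)
        + ((n : ℝ) * k₂ * x₁ - g₂ * x₂) * (deriv g u * 1)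
        = -g₂ * x₂ * deriv g u := by
      have : c = k₂ / g₁ := hc
      rw [this]; field_simp
      ring
    have h2 : ∀ z : ℝ, g (x₁ + z) = g (x₁ + z) := fun _ => rfl
    have h3 : (fun z => h z * g (x₂ + c * (x₁ + z))) = fun z => h z * g (u + c * z) := by
      ext z; rw [hu]; ring_nf
    show -((n:ℝ)*g₁) * x₁ * (deriv g u * c) + ((n:ℝ)*k₂ * x₁ - g₂ * x₂) * (deriv g u * 1) + lam1 x₂ * ((∫ z in Set.Ioi (0:ℝ), h z * g (x₂ + c * (x₁ + z))) - g (x₂ + c * x₁)) = _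
    rw [h1]
    have h3' : (∫ z in Set.Ioi (0:ℝ), h z * g (x₂ + c * (x₁ + z)))
        = ∫ z in Set.Ioi (0:ℝ), h z * g (u + c * z) :=
      congrArg (fun φ => ∫ z in Set.Ioi (0:ℝ), φ z) h3
    rw [h3', show x₂ + c * x₁ = u from hu.symm]
  constructor
  · exact hgen
  · rw [hgen]
    congr 2
    set b : ℝ := g₁ / k₂ with hb
    have hbpos : 0 < b := div_pos hg₁ hk₂
    have hbc : b * c = 1 := by rw [hb, hc]; field_simp [hg₁.ne', hk₂.ne']
    have key := MeasureTheory.integral_comp_mul_left_Ioi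
      (fun z => h z * g (u + c * z)) 0 hbpos
    simp only [mul_zero, smul_eq_mul] at key
    have hφ : (fun w => (g₁ / k₂) * h ((g₁ / k₂) * w) * g (u + w))
        = fun w => b * (h (b * w) * g (u + c * (b * w))) := by
      ext w
      have : c * (b * w) = w := by
        rw [← mul_assoc, mul_comm c b, hbc, one_mul]
      rw [this, ← hb]; ring
    rw [hφ, MeasureTheory.integral_const_mul, key, ← mul_assoc,
      mul_inv_cancel₀ (ne_of_gt hbpos), one_mul]
end
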